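/- For t > 0 and ν ≥ 1/2 with g(x) = (x+1)ln(x+1) - x·ln x, the limit as ν → ∞ of g(ν₊(ν,t) - 1/2) + g(ν₋(ν,t) - 1/2) - g(ν - 1/2) equals ln t + 1, where ν±(ν,t) = (1/2)·√(4νt ± 2t·√(4νt + t² + 1) + 2t² + 1). -/

import Mathlib

open Real Filter

lemma sqrt_tendsto_atTop : Tendsto Real.sqrt atTop atTop := by
  refine tendsto_atTop_atTop.2 fun b => ⟨(max b 0)^2, fun a ha => ?_⟩
  calc b ≤ max b 0 := le_max_left _ _
    _ = Real.sqrt ((max b 0)^2) := (Real.sqrt_sq (le_max_right _ _)).symm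
    _ ≤ Real.sqrt a := Real.sqrt_le_sqrt ha

lemma g_sub_log_tendsto (g : ℝ → ℝ)
    (hg : ∀ x, g x = (x + 1) * Real.log (x + 1) - x * Real.log x) :
    Tendsto (fun x : ℝ => g x - Real.log x - 1) atTop (nhds 0) := by
  have h1 : Tendsto (fun x : ℝ => x * Real.log (1 + 1/x)) atTop (nhds 1) := by
    simpa using Real.tendsto_mul_log_one_add_div_atTop 1
  have honep : Tendsto (fun x : ℝ => 1 + 1/x) atTop (nhds 1) := by
    have := tendsto_inv_atTop_zero (𝕜 := ℝ)
    simpa [one_div] using tendsto_const_nhds.add this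
  have h2 : Tendsto (fun x : ℝ => Real.log (1 + 1/x)) atTop (nhds 0) := by
    have := (Real.continuousAt_log one_ne_zero).tendsto.comp honep
    simpa [Function.comp_def] using this
  have key : Tendsto (fun x : ℝ => x * Real.log (1 + 1/x) + Real.log (1 + 1/x) - 1)
      atTop (nhds 0) := by
    have := (h1.add h2).sub_const 1
    simpa using this
  refine key.congr' ?_
  filter_upwards [eventually_gt_atTop (0:ℝ)] with x hx
  have hx1 : (0:ℝ) < x + 1 := by linarith
  have hlog : Real.log (1 + 1/x) = Real.log (x+1) - Real.log x := by
    rw [show (1 : ℝ) + 1/x = (x+1)/x by field_simp, Real.log_div hx1.ne' hx.ne']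
  rw [hlog, hg x]; ring

theorem conditional_entropy_scaling_gaussian (t : ℝ) (ht : 0 < t)
    (g : ℝ → ℝ) (hg : ∀ x, g x = (x + 1) * Real.log (x + 1) - x * Real.log x) :
    Tendsto (fun ν : ℝ =>
        g ((1/2) * Real.sqrt (4*ν*t + 2*t*Real.sqrt (4*ν*t + t^2 + 1) + 2*t^2 + 1) - 1/2)
        + g ((1/2) * Real.sqrt (4*ν*t - 2*t*Real.sqrt (4*ν*t + t^2 + 1) + 2*t^2 + 1) - 1/2)
        - g (ν - 1/2))
      atTop (nhds (Real.log t + 1)) := by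
  set s : ℝ → ℝ := fun ν => Real.sqrt (4*ν*t + t^2 + 1) with hsdef
  have hs_sq : ∀ ν : ℝ, 0 ≤ ν → (s ν)^2 = 4*ν*t + t^2 + 1 := by
    intro ν hν
    exact Real.sq_sqrt (by nlinarith)
  have hs_nonneg : ∀ ν : ℝ, 0 ≤ s ν := fun ν => Real.sqrt_nonneg _
  have hs_ge_t : ∀ ν : ℝ, 0 ≤ ν → t ≤ s ν := by
    intro ν hν
    have : t = Real.sqrt (t^2) := (Real.sqrt_sq ht.le).symm
    rw [this]
    exact Real.sqrt_le_sqrt (by nlinarith)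
  -- s tends to atTop
  have hinlim : Tendsto (fun ν : ℝ => 4*ν*t + t^2 + 1) atTop atTop := by
    apply tendsto_atTop_add_const_right
    apply tendsto_atTop_add_const_right
    have h := tendsto_id.atTop_mul_const (show (0:ℝ) < 4*t by positivity)
    refine h.congr fun ν => by simp only [id]; ring
  have hslim : Tendsto s atTop atTop := sqrt_tendsto_atTop.comp hinlim
  -- the three arguments
  set A : ℝ → ℝ := fun ν =>
    (1/2) * Real.sqrt (4*ν*t + 2*t*Real.sqrt (4*ν*t + t^2 + 1) + 2*t^2 + 1) - 1/2 with hAdef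
  set B : ℝ → ℝ := fun ν =>
    (1/2) * Real.sqrt (4*ν*t - 2*t*Real.sqrt (4*ν*t + t^2 + 1) + 2*t^2 + 1) - 1/2 with hBdef
  set C : ℝ → ℝ := fun ν => ν - 1/2 with hCdef
  have hAeq : ∀ ν : ℝ, 0 ≤ ν → A ν = (s ν + t - 1)/2 := by
    intro ν hν
    have hin : 4*ν*t + 2*t*Real.sqrt (4*ν*t + t^2 + 1) + 2*t^2 + 1 = (s ν + t)^2 := by
      have := hs_sq ν hν
      simp only [hsdef] at this ⊢
      nlinarith
    simp only [hAdef, hin, Real.sqrt_sq (by linarith [hs_nonneg ν, ht.le] : (0:ℝ) ≤ s ν + t)]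
    ring
  have hBeq : ∀ ν : ℝ, 0 ≤ ν → B ν = (s ν - t - 1)/2 := by
    intro ν hν
    have hin : 4*ν*t - 2*t*Real.sqrt (4*ν*t + t^2 + 1) + 2*t^2 + 1 = (s ν - t)^2 := by
      have := hs_sq ν hν
      simp only [hsdef] at this ⊢
      nlinarith
    simp only [hBdef, hin, Real.sqrt_sq (by linarith [hs_ge_t ν hν] : (0:ℝ) ≤ s ν - t)]
    ring
  -- limits to atTop
  have hA : Tendsto A atTop atTop := by
    have h1 : Tendsto (fun ν : ℝ => (s ν + (t - 1)) * (1/2)) atTop atTop :=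
      (tendsto_atTop_add_const_right _ _ hslim).atTop_mul_const (by norm_num)
    refine h1.congr' ?_
    filter_upwards [eventually_ge_atTop (0:ℝ)] with ν hν
    rw [hAeq ν hν]; ring
  have hB : Tendsto B atTop atTop := by
    have h1 : Tendsto (fun ν : ℝ => (s ν + (-t - 1)) * (1/2)) atTop atTop :=
      (tendsto_atTop_add_const_right _ _ hslim).atTop_mul_const (by norm_num)
    refine h1.congr' ?_
    filter_upwards [eventually_ge_atTop (0:ℝ)] with ν hν
    rw [hBeq ν hν]; ring
  have hC : Tendsto C atTop atTop := tendsto_atTop_add_const_right _ _ tendsto_id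
  -- s ν / ν → 0
  have hsnu : Tendsto (fun ν : ℝ => s ν / ν) atTop (nhds 0) := by
    have hform : Tendsto (fun ν : ℝ => Real.sqrt (4*t*(1/ν) + (t^2+1)*(1/ν)^2)) atTop (nhds 0) := by
      have hin0 : Tendsto (fun ν : ℝ => 4*t*(1/ν) + (t^2+1)*(1/ν)^2) atTop (nhds 0) := by
        have hi : Tendsto (fun ν : ℝ => 1/ν) atTop (nhds 0) := by
          simpa [one_div] using tendsto_inv_atTop_zero (𝕜 := ℝ)
        have := ((hi.const_mul (4*t)).add ((hi.pow 2).const_mul (t^2+1)))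
        simpa using this
      have := (Real.continuous_sqrt.tendsto 0).comp hin0
      simpa [Function.comp_def] using this
    refine hform.congr' ?_
    filter_upwards [eventually_gt_atTop (0:ℝ)] with ν hν
    have hν2 : (0:ℝ) < ν^2 := by positivity
    have : 4*t*(1/ν) + (t^2+1)*(1/ν)^2 = (4*ν*t + t^2 + 1)/ν^2 := by field_simp; ring
    rw [this, Real.sqrt_div (by nlinarith : (0:ℝ) ≤ 4*ν*t + t^2 + 1) (ν^2),
      Real.sqrt_sq hν.le]
  -- ratio limit
  have hR : Tendsto (fun ν : ℝ => A ν * B ν / C ν) atTop (nhds t) := by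
    have hnum : Tendsto (fun ν : ℝ => 4*t - 2*(s ν/ν) + 2*(1/ν)) atTop (nhds (4*t)) := by
      have hi : Tendsto (fun ν : ℝ => 1/ν) atTop (nhds 0) := by
        simpa [one_div] using tendsto_inv_atTop_zero (𝕜 := ℝ)
      have := ((tendsto_const_nhds (x := (4*t : ℝ)) (f := atTop)).sub
        (hsnu.const_mul 2)).add (hi.const_mul 2)
      simpa using this
    have hden : Tendsto (fun ν : ℝ => 4 - 2*(1/ν)) atTop (nhds 4) := by
      have hi : Tendsto (fun ν : ℝ => 1/ν) atTop (nhds 0) := by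
        simpa [one_div] using tendsto_inv_atTop_zero (𝕜 := ℝ)
      have := (tendsto_const_nhds (x := (4 : ℝ)) (f := atTop)).sub (hi.const_mul 2)
      simpa using this
    have hfrac : Tendsto (fun ν : ℝ => (4*t - 2*(s ν/ν) + 2*(1/ν)) / (4 - 2*(1/ν)))
        atTop (nhds t) := by
      have := hnum.div hden (by norm_num)
      rw [show (4*t)/4 = t by ring] at this
      exact this
    refine hfrac.congr' ?_
    filter_upwards [eventually_gt_atTop (1:ℝ)] with ν hν
    have hν0 : (0:ℝ) < ν := by linarith
    have hab : A ν * B ν = (4*ν*t - 2*s ν + 2)/4 := by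
      rw [hAeq ν hν0.le, hBeq ν hν0.le]
      have := hs_sq ν hν0.le
      nlinarith [this]
    have hCv : C ν = ν - 1/2 := rfl
    rw [hab, hCv]
    have h2 : (4:ℝ) - 2*(1/ν) ≠ 0 := by
      have : 1/ν < 1 := by rw [div_lt_one hν0]; linarith
      nlinarith
    rw [div_div, div_eq_div_iff h2 (by nlinarith : (4:ℝ)*(ν - 1/2) ≠ 0)]
    field_simp
    ring
  have hlogR : Tendsto (fun ν : ℝ => Real.log (A ν * B ν / C ν)) atTop (nhds (Real.log t)) :=
    (Real.continuousAt_log ht.ne').tendsto.comp hR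
  -- assemble
  have hH := g_sub_log_tendsto g hg
  have hfinal : Tendsto (fun ν : ℝ =>
      ((g (A ν) - Real.log (A ν) - 1) + (g (B ν) - Real.log (B ν) - 1)
        - (g (C ν) - Real.log (C ν) - 1)) + Real.log (A ν * B ν / C ν) + 1)
      atTop (nhds (Real.log t + 1)) := by
    have h0 : Tendsto (fun ν : ℝ =>
        (g (A ν) - Real.log (A ν) - 1) + (g (B ν) - Real.log (B ν) - 1)
          - (g (C ν) - Real.log (C ν) - 1)) atTop (nhds 0) := by
      have := ((hH.comp hA).add (hH.comp hB)).sub (hH.comp hC)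
      simpa using this
    have := (h0.add hlogR).add_const 1
    simpa using this
  refine hfinal.congr' ?_
  filter_upwards [hA.eventually (eventually_gt_atTop (0:ℝ)),
    hB.eventually (eventually_gt_atTop (0:ℝ)),
    hC.eventually (eventually_gt_atTop (0:ℝ))] with ν h1 h2 h3
  have hlog : Real.log (A ν * B ν / C ν)
      = Real.log (A ν) + Real.log (B ν) - Real.log (C ν) := by
    rw [Real.log_div (mul_pos h1 h2).ne' h3.ne', Real.log_mul h1.ne' h2.ne']
  rw [hlog]
  show _ = g (A ν) + g (B ν) - g (C ν)
  ring
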